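/- arXiv:1312.2569 — 2 statements merged into one kernel-verified Lean document; each statement's English description precedes it below -/
import Mathlib

section
/- Let N be a positive integer and suppose there exists a real ρ > 0 such that for every integer M ≥ 1 one has ℓ(M) − ρ·log M ≥ ℓ(N) − ρ·log N. Then N is a value of Landau's function, i.e., there exists n with N = g(n). -/
/-- Landau's function: the maximal order of an element of the symmetric group `S_n`. -/
noncomputable def landau (n : ℕ) : ℕ :=
  Finset.univ.sup fun σ : Equiv.Perm (Fin n) => orderOf σ

/-- The additive function `ℓ` with `ℓ(1) = 0` and `ℓ(p^k) = p^k` for primes `p` and `k ≥ 1`. -/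
def ell (M : ℕ) : ℕ := ∑ p ∈ M.primeFactors, p ^ M.factorization p

theorem sum_le_prod_of_two_le {s : Finset ℕ} {f : ℕ → ℕ} (hf : ∀ i ∈ s, 2 ≤ f i) :
    ∑ i ∈ s, f i ≤ ∏ i ∈ s, f i := by
  induction s using Finset.induction with
  | empty => simp
  | @insert a s hnotmem ih =>
    rw [Finset.sum_insert hnotmem, Finset.prod_insert hnotmem]
    rcases s.eq_empty_or_nonempty with rfl | hs
    · simp
    · have h2 : 2 ≤ ∏ i ∈ s, f i := by
        obtain ⟨b, hb⟩ := hs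
        calc 2 ≤ f b := hf b (Finset.mem_insert_of_mem hb)
        _ ≤ ∏ i ∈ s, f i := Finset.single_le_prod' (fun i hi =>
              le_trans one_le_two (hf i (Finset.mem_insert_of_mem hi))) hb
      have ha : 2 ≤ f a := hf a (Finset.mem_insert_self a s)
      have := ih (fun i hi => hf i (Finset.mem_insert_of_mem hi))
      nlinarith

theorem two_le_pow_factorization {n p : ℕ} (hp : p ∈ n.primeFactors) :
    2 ≤ p ^ n.factorization p := by
  have hpp := Nat.prime_of_mem_primeFactors hp
  have hk : n.factorization p ≠ 0 := by
    rw [← Finsupp.mem_support_iff, Nat.support_factorization]; exact hp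
  calc 2 ≤ p := hpp.two_le
  _ ≤ p ^ n.factorization p := Nat.le_self_pow hk p

theorem ell_le_self {n : ℕ} (hn : n ≠ 0) : ell n ≤ n := by
  calc ell n ≤ ∏ p ∈ n.primeFactors, p ^ n.factorization p :=
        sum_le_prod_of_two_le (fun p hp => two_le_pow_factorization hp)
  _ = n := by
      conv_rhs => rw [← Nat.factorization_prod_pow_eq_self hn]
      rw [Finsupp.prod, Nat.support_factorization]

theorem ell_lcm_le {a b : ℕ} (ha : a ≠ 0) (hb : b ≠ 0) :
    ell (Nat.lcm a b) ≤ ell a + ell b := by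
  have key : ∀ p ∈ (Nat.lcm a b).primeFactors,
      p ^ (Nat.lcm a b).factorization p ≤
        (if p ∈ a.primeFactors then p ^ a.factorization p else 0) +
        (if p ∈ b.primeFactors then p ^ b.factorization p else 0) := by
    intro p hp
    have hne : (Nat.lcm a b).factorization p ≠ 0 := by
      rw [← Finsupp.mem_support_iff, Nat.support_factorization]; exact hp
    rw [Nat.factorization_lcm ha hb, Finsupp.sup_apply] at hne ⊢
    rcases le_total (a.factorization p) (b.factorization p) with hab | hab
    · rw [sup_eq_right.mpr hab] at hne ⊢
      have hmem : p ∈ b.primeFactors := by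
        rw [← Nat.support_factorization, Finsupp.mem_support_iff]; exact hne
      rw [if_pos hmem]; exact Nat.le_add_left _ _
    · rw [sup_eq_left.mpr hab] at hne ⊢
      have hmem : p ∈ a.primeFactors := by
        rw [← Nat.support_factorization, Finsupp.mem_support_iff]; exact hne
      rw [if_pos hmem]; exact Nat.le_add_right _ _
  calc ell (Nat.lcm a b)
      ≤ ∑ p ∈ (Nat.lcm a b).primeFactors,
        ((if p ∈ a.primeFactors then p ^ a.factorization p else 0) +
         (if p ∈ b.primeFactors then p ^ b.factorization p else 0)) :=
        Finset.sum_le_sum key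
  _ = (∑ p ∈ (Nat.lcm a b).primeFactors, if p ∈ a.primeFactors then p ^ a.factorization p else 0)
      + (∑ p ∈ (Nat.lcm a b).primeFactors, if p ∈ b.primeFactors then p ^ b.factorization p else 0) :=
        Finset.sum_add_distrib
  _ ≤ ell a + ell b := by
      apply add_le_add
      · rw [Finset.sum_ite_mem]
        exact Finset.sum_le_sum_of_subset Finset.inter_subset_right
      · rw [Finset.sum_ite_mem]
        exact Finset.sum_le_sum_of_subset Finset.inter_subset_right

theorem ell_multiset_lcm_le_sum {m : Multiset ℕ} (hm : ∀ c ∈ m, c ≠ 0) :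
    ell m.lcm ≤ m.sum := by
  induction m using Multiset.induction with
  | empty => simp [ell, Multiset.lcm_zero]
  | cons a m ih =>
    rw [Multiset.lcm_cons, Multiset.sum_cons]
    have ha : a ≠ 0 := hm a (Multiset.mem_cons_self a m)
    have hm' : ∀ c ∈ m, c ≠ 0 := fun c hc => hm c (Multiset.mem_cons_of_mem hc)
    have hml : m.lcm ≠ 0 := by
      rw [Ne, Multiset.lcm_eq_zero_iff]
      intro h0; exact hm' 0 h0 rfl
    calc ell (lcm a m.lcm) ≤ ell a + ell m.lcm := ell_lcm_le ha hml
    _ ≤ a + m.sum := add_le_add (ell_le_self ha) (ih hm')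

theorem ell_orderOf_le {n : ℕ} (σ : Equiv.Perm (Fin n)) : ell (orderOf σ) ≤ n := by
  rw [← Equiv.Perm.lcm_cycleType]
  calc ell σ.cycleType.lcm ≤ σ.cycleType.sum :=
        ell_multiset_lcm_le_sum (fun c hc => by
          have := Equiv.Perm.two_le_of_mem_cycleType hc; omega)
  _ = σ.support.card := Equiv.Perm.sum_cycleType σ
  _ ≤ Fintype.card (Fin n) := Finset.card_le_univ _
  _ = n := Fintype.card_fin n

theorem exists_perm_orderOf_eq (N : ℕ) (hN : 1 ≤ N) :
    ∃ σ : Equiv.Perm (Fin (ell N)), orderOf σ = N := by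
  have hN0 : N ≠ 0 := by omega
  set m : Multiset ℕ := N.primeFactors.val.map (fun p => p ^ N.factorization p) with hm
  have hsum : m.sum = ell N := rfl
  have h2 : ∀ a ∈ m, 2 ≤ a := by
    intro a ha
    obtain ⟨p, hp, rfl⟩ := Multiset.mem_map.mp ha
    exact two_le_pow_factorization hp
  obtain ⟨σ, hσ⟩ := (Equiv.Perm.exists_with_cycleType_iff (Fin (ell N))).mpr
    ⟨by rw [hsum, Fintype.card_fin], h2⟩
  refine ⟨σ, ?_⟩
  rw [← Equiv.Perm.lcm_cycleType, hσ]
  have hml : m.lcm ≠ 0 := by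
    rw [Ne, Multiset.lcm_eq_zero_iff]
    intro h0; have := h2 0 h0; omega
  apply Nat.dvd_antisymm
  · apply Multiset.lcm_dvd.mpr
    intro b hb
    obtain ⟨p, hp, rfl⟩ := Multiset.mem_map.mp hb
    exact Nat.ordProj_dvd N p
  · rw [← Nat.factorization_le_iff_dvd hN0 hml, Finsupp.le_def]
    intro p
    rcases Nat.eq_zero_or_pos (N.factorization p) with h0 | hpos
    · simp [h0]
    · have hp : p ∈ N.primeFactors := by
        rw [← Nat.support_factorization, Finsupp.mem_support_iff]; omega
      have hpp := Nat.prime_of_mem_primeFactors hp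
      have hdvd : p ^ N.factorization p ∣ m.lcm :=
        Multiset.dvd_lcm (Multiset.mem_map.mpr ⟨p, hp, rfl⟩)
      exact (Nat.Prime.pow_dvd_iff_le_factorization hpp hml).mp hdvd

/-- If `N ≥ 1` and there is `ρ > 0` with
`ℓ(M) - ρ log M ≥ ℓ(N) - ρ log N` for all integers `M ≥ 1`, then `N` is a value of
Landau's function. -/
theorem mem_range_landau_of_superior (N : ℕ) (hN : 1 ≤ N) (ρ : ℝ) (hρ : 0 < ρ)
    (h : ∀ M : ℕ, 1 ≤ M →
      (ell N : ℝ) - ρ * Real.log N ≤ (ell M : ℝ) - ρ * Real.log M) :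
    ∃ n : ℕ, N = landau n := by
  refine ⟨ell N, le_antisymm ?_ ?_⟩
  · obtain ⟨σ, hσ⟩ := exists_perm_orderOf_eq N hN
    have hle : orderOf σ ≤ landau (ell N) := by
      rw [landau]
      exact Finset.le_sup (f := fun τ : Equiv.Perm (Fin (ell N)) => orderOf τ) (Finset.mem_univ σ)
    rwa [hσ] at hle
  · rw [landau]
    apply Finset.sup_le
    intro σ _
    set M := orderOf σ with hM
    have hM1 : 1 ≤ M := orderOf_pos σ
    have hle : ell M ≤ ell N := ell_orderOf_le σ
    have := h M hM1
    have hlog : Real.log M ≤ Real.log N := by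
      have hcast : (ell M : ℝ) ≤ (ell N : ℝ) := Nat.cast_le.mpr hle
      nlinarith
    have : (M : ℝ) ≤ (N : ℝ) := by
      rwa [Real.log_le_log_iff (by exact_mod_cast hM1) (by exact_mod_cast hN)] at hlog
    exact_mod_cast this
end

section
/- Let ρ > 2/log 2, let x > 4 be the unique real with ρ = x/log x, let N = N_ρ, and define ben(M) = ℓ(M) − ℓ(N) − ρ·log(M/N) for positive integers M. Then: (a) for every prime p and every integer t ≥ 1, ben(N·p^t) ≥ t·ben(N·p); and (b) for every prime p ≤ x and every integer t with 1 ≤ t ≤ α_p, ben(N/p^t) ≥ t·ben(N/p) (note that p^{α_p} divides N, so N/p^t is an integer). -/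
/-- `(ℓ(p^k) - ℓ(p^{k-1})) / log p`, the cost of raising the exponent of `p` from `k-1` to `k`. -/
noncomputable def ellCost (p k : ℕ) : ℝ :=
  ((ell (p ^ k) : ℝ) - (ell (p ^ (k - 1)) : ℝ)) / Real.log p

/-- The exponent `α_p` of the prime `p` in `N_ρ`, where `ρ = x / log x`:
`α_p = 0` for `p > x`, and otherwise `α_p` is the (largest) `k ≥ 1` with
`(p^k - p^{k-1})/log p ≤ ρ < (p^{k+1} - p^k)/log p` (here `p^1 - p^0` is to be read as `p`,
i.e. as `ℓ(p^1) - ℓ(p^0)`). -/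
noncomputable def alphaExp (x : ℝ) (p : ℕ) : ℕ :=
  if (p : ℝ) ≤ x then sSup {k : ℕ | 1 ≤ k ∧ ellCost p k ≤ x / Real.log x} else 0

/-- Ramanujan's superior champion `N_ρ = ∏_{p ≤ x} p^{α_p}`, with `ρ = x / log x`. -/
noncomputable def Nrho (x : ℝ) : ℕ :=
  ∏ p ∈ (Finset.range (⌊x⌋₊ + 1)).filter Nat.Prime, p ^ alphaExp x p

/-- The benefit `ben(M) = ℓ(M) - ℓ(N_ρ) - ρ log(M/N_ρ)`, where `ρ = x / log x`. -/
noncomputable def benefit (x : ℝ) (M : ℕ) : ℝ :=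
  (ell M : ℝ) - (ell (Nrho x) : ℝ) - x / Real.log x * Real.log ((M : ℝ) / (Nrho x : ℝ))

lemma ell_prime_pow {p : ℕ} (hp : p.Prime) (k : ℕ) :
    ell (p ^ k) = if k = 0 then 0 else p ^ k := by
  rcases eq_or_ne k 0 with rfl | hk
  · simp [ell]
  · rw [if_neg hk]
    unfold ell
    rw [Nat.primeFactors_pow _ hk, hp.primeFactors, hp.factorization_pow]
    simp

lemma ell_mul_coprime {m n : ℕ} (hm : m ≠ 0) (hn : n ≠ 0) (h : Nat.Coprime m n) :
    ell (m * n) = ell m + ell n := by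
  unfold ell
  have hd : Disjoint m.primeFactors n.primeFactors := Nat.Coprime.disjoint_primeFactors h
  rw [Nat.primeFactors_mul hm hn, Finset.sum_union hd]
  congr 1
  · refine Finset.sum_congr rfl fun p hpm => ?_
    have hpn : n.factorization p = 0 := by
      have : p ∉ n.primeFactors := Finset.disjoint_left.mp hd hpm
      rwa [← Nat.support_factorization, Finsupp.notMem_support_iff] at this
    rw [Nat.factorization_mul hm hn, Finsupp.add_apply, hpn, add_zero]
  · refine Finset.sum_congr rfl fun p hpn => ?_
    have hpm : m.factorization p = 0 := by
      have : p ∉ m.primeFactors := Finset.disjoint_right.mp hd hpn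
      rwa [← Nat.support_factorization, Finsupp.notMem_support_iff] at this
    rw [Nat.factorization_mul hm hn, Finsupp.add_apply, hpm, zero_add]

lemma claimA {p : ℕ} (hp : p.Prime) (v : ℕ) : ∀ t : ℕ, 1 ≤ t →
    (t : ℝ) * ((ell (p^(v+1)) : ℝ) - (ell (p^v) : ℝ)) ≤ (ell (p^(v+t)) : ℝ) - (ell (p^v) : ℝ) := by
  have hp2 : (2:ℝ) ≤ (p:ℝ) := by exact_mod_cast hp.two_le
  have hE : ∀ k, k ≠ 0 → ((ell (p^k) : ℕ) : ℝ) = (p:ℝ)^k := by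
    intro k hk; rw [ell_prime_pow hp, if_neg hk]; push_cast; ring
  have hEv : (0:ℝ) ≤ (ell (p^v) : ℝ) := by positivity
  have hEvle : ((ell (p^v) : ℕ) : ℝ) ≤ (p:ℝ)^v := by
    rw [ell_prime_pow hp]
    rcases eq_or_ne v 0 with rfl | hv
    · simp
    · rw [if_neg hv]; push_cast; exact le_refl _
  intro t ht
  induction t with
  | zero => omega
  | succ t ih =>
    rcases Nat.eq_zero_or_pos t with rfl | ht1
    · simp
    · have IH := ih ht1
      have h1 : ((ell (p^(v+t)) : ℕ) : ℝ) = (p:ℝ)^(v+t) := hE _ (by omega)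
      have h2 : ((ell (p^(v+t+1)) : ℕ) : ℝ) = (p:ℝ)^(v+t+1) := hE _ (by omega)
      have h3 : ((ell (p^(v+1)) : ℕ) : ℝ) = (p:ℝ)^(v+1) := hE _ (by omega)
      have hmono : (p:ℝ)^(v+1) ≤ (p:ℝ)^(v+t) :=
        pow_le_pow_right₀ (by linarith) (by omega)
      have hstep : (p:ℝ)^(v+1) - (ell (p^v) : ℝ) ≤ (p:ℝ)^(v+t+1) - (p:ℝ)^(v+t) := by
        have : (p:ℝ)^(v+t+1) = (p:ℝ)^(v+t) * p := by ring
        nlinarith [pow_nonneg (by linarith : (0:ℝ) ≤ (p:ℝ)) (v+t)]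
      have hidx : v + (t + 1) = v + t + 1 := by omega
      rw [hidx]
      push_cast
      rw [h2, h3]
      rw [h1, h3] at IH
      nlinarith

lemma Dmono {p : ℕ} (hp : p.Prime) {j m : ℕ} (hjm : j ≤ m) :
    (ell (p^(j+1)) : ℝ) - (ell (p^j) : ℝ) ≤ (ell (p^(m+1)) : ℝ) - (ell (p^m) : ℝ) := by
  have hp2 : (2:ℝ) ≤ (p:ℝ) := by exact_mod_cast hp.two_le
  have hE : ∀ k, k ≠ 0 → ((ell (p^k) : ℕ) : ℝ) = (p:ℝ)^k := by
    intro k hk; rw [ell_prime_pow hp, if_neg hk]; push_cast; ring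
  have hE0 : ((ell (p^0) : ℕ) : ℝ) = 0 := by rw [ell_prime_pow hp]; simp
  rcases eq_or_ne j 0 with rfl | hj
  · rcases eq_or_ne m 0 with rfl | hm
    · exact le_refl _
    · rw [hE0, hE 1 one_ne_zero, hE (m+1) (by omega), hE m hm]
      have h1 : (p:ℝ)^1 ≤ (p:ℝ)^m := pow_le_pow_right₀ (by linarith) (by omega)
      have h2 : (p:ℝ)^(m+1) = (p:ℝ)^m * p := by ring
      simp only [pow_one] at h1 ⊢
      nlinarith
  · have hm : m ≠ 0 := by omega
    rw [hE j hj, hE m hm, hE (j+1) (by omega), hE (m+1) (by omega)]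
    have h1 : (p:ℝ)^j ≤ (p:ℝ)^m := pow_le_pow_right₀ (by linarith) hjm
    have h2 : (p:ℝ)^(m+1) = (p:ℝ)^m * p := by ring
    have h3 : (p:ℝ)^(j+1) = (p:ℝ)^j * p := by ring
    nlinarith

lemma claimB {p : ℕ} (hp : p.Prime) (v : ℕ) : ∀ t : ℕ, 1 ≤ t → t ≤ v →
    (t : ℝ) * ((ell (p^(v-1)) : ℝ) - (ell (p^v) : ℝ)) ≤ (ell (p^(v-t)) : ℝ) - (ell (p^v) : ℝ) := by
  intro t
  induction t with
  | zero => omega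
  | succ t ih =>
    intro _ htv
    rcases Nat.eq_zero_or_pos t with rfl | ht1
    · simp
    · have IH := ih ht1 (by omega)
      have hD := Dmono hp (show v - t - 1 ≤ v - 1 by omega)
      have e1 : v - t - 1 + 1 = v - t := by omega
      have e2 : v - 1 + 1 = v := by omega
      rw [e1, e2] at hD
      have e3 : v - (t + 1) = v - t - 1 := by omega
      rw [e3]
      push_cast
      nlinarith

lemma Nrho_pos (x : ℝ) : 0 < Nrho x := by
  apply Finset.prod_pos
  intro p hpmem
  have hp : p.Prime := (Finset.mem_filter.mp hpmem).2
  exact pow_pos hp.pos _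

lemma factorization_Nrho (x : ℝ) {p : ℕ} (hp : p.Prime) (hpx : (p:ℝ) ≤ x) :
    (Nrho x).factorization p = alphaExp x p := by
  unfold Nrho
  rw [Nat.factorization_prod (fun q hq => (pow_pos ((Finset.mem_filter.mp hq).2).pos _).ne')]
  rw [Finsupp.finset_sum_apply]
  have hmem : p ∈ (Finset.range (⌊x⌋₊ + 1)).filter Nat.Prime := by
    refine Finset.mem_filter.mpr ⟨Finset.mem_range.mpr ?_, hp⟩
    have := Nat.le_floor hpx
    omega
  rw [Finset.sum_eq_single p]
  · rw [(hp).factorization_pow, Finsupp.single_eq_same]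
  · intro q hq hqp
    rw [((Finset.mem_filter.mp hq).2).factorization_pow, Finsupp.single_eq_of_ne' hqp]
  · intro h; exact absurd hmem h

lemma benefit_mul_pow (x : ℝ) {p : ℕ} (hp : p.Prime) (t : ℕ) :
    benefit x (Nrho x * p ^ t) =
      (ell (p ^ ((Nrho x).factorization p + t)) : ℝ) - (ell (p ^ ((Nrho x).factorization p)) : ℝ)
      - x / Real.log x * ((t : ℝ) * Real.log p) := by
  set N := Nrho x with hN
  have hN0 : N ≠ 0 := (Nrho_pos x).ne'
  set v := N.factorization p with hv
  set Q := N / p ^ v with hQ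
  have hNfact : p ^ v * Q = N := Nat.ordProj_mul_ordCompl_eq_self N p
  have hQ0 : Q ≠ 0 := (Nat.ordCompl_pos p hN0).ne'
  have hcop : ∀ k : ℕ, Nat.Coprime (p ^ k) Q :=
    fun k => Nat.Coprime.pow_left k (Nat.coprime_ordCompl hp hN0)
  have hmul : N * p ^ t = p ^ (v + t) * Q := by
    rw [← hNfact]; ring
  have hellN : ell N = ell (p ^ v) + ell Q := by
    rw [← hNfact, ell_mul_coprime (pow_pos hp.pos v).ne' hQ0 (hcop v)]
  have hellM : ell (N * p ^ t) = ell (p ^ (v + t)) + ell Q := by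
    rw [hmul, ell_mul_coprime (pow_pos hp.pos _).ne' hQ0 (hcop _)]
  have hlog : Real.log ((↑(N * p ^ t) : ℝ) / (N : ℝ)) = (t : ℝ) * Real.log p := by
    have : (↑(N * p ^ t) : ℝ) / (N : ℝ) = (p : ℝ) ^ t := by
      push_cast
      field_simp
    rw [this, Real.log_pow]
  unfold benefit
  rw [← hN, hellM, hlog, hellN]
  push_cast
  ring

lemma benefit_div_pow (x : ℝ) {p : ℕ} (hp : p.Prime) {t : ℕ}
    (ht : t ≤ (Nrho x).factorization p) :
    benefit x (Nrho x / p ^ t) =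
      (ell (p ^ ((Nrho x).factorization p - t)) : ℝ) - (ell (p ^ ((Nrho x).factorization p)) : ℝ)
      + x / Real.log x * ((t : ℝ) * Real.log p) := by
  set N := Nrho x with hN
  have hN0 : N ≠ 0 := (Nrho_pos x).ne'
  set v := N.factorization p with hv
  set Q := N / p ^ v with hQ
  have hNfact : p ^ v * Q = N := Nat.ordProj_mul_ordCompl_eq_self N p
  have hQ0 : Q ≠ 0 := (Nat.ordCompl_pos p hN0).ne'
  have hcop : ∀ k : ℕ, Nat.Coprime (p ^ k) Q :=
    fun k => Nat.Coprime.pow_left k (Nat.coprime_ordCompl hp hN0)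
  have hdiv : N / p ^ t = p ^ (v - t) * Q := by
    rw [← hNfact]
    have : p ^ v = p ^ t * p ^ (v - t) := by rw [← pow_add]; congr 1; omega
    rw [this, mul_assoc, Nat.mul_div_cancel_left _ (pow_pos hp.pos t)]
  have hellN : ell N = ell (p ^ v) + ell Q := by
    rw [← hNfact, ell_mul_coprime (pow_pos hp.pos v).ne' hQ0 (hcop v)]
  have hellM : ell (N / p ^ t) = ell (p ^ (v - t)) + ell Q := by
    rw [hdiv, ell_mul_coprime (pow_pos hp.pos _).ne' hQ0 (hcop _)]
  have hdvd : p ^ t ∣ N := dvd_trans (pow_dvd_pow p ht) (Nat.ordProj_dvd N p)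
  have hlog : Real.log ((↑(N / p ^ t) : ℝ) / (N : ℝ)) = -((t : ℝ) * Real.log p) := by
    have hc : (↑(N / p ^ t) : ℝ) = (N : ℝ) / (p : ℝ) ^ t := by
      rw [Nat.cast_div hdvd (by exact_mod_cast (pow_pos hp.pos t).ne')]
      push_cast; ring
    have hNR : (N : ℝ) ≠ 0 := Nat.cast_ne_zero.mpr hN0
    have : (↑(N / p ^ t) : ℝ) / (N : ℝ) = ((p : ℝ) ^ t)⁻¹ := by
      have hpR : ((p:ℝ))^t ≠ 0 := by exact_mod_cast (pow_pos hp.pos t).ne'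
      rw [hc]; field_simp
    rw [this, Real.log_inv, Real.log_pow]
  unfold benefit
  rw [← hN, hellM, hlog, hellN]
  push_cast
  ring

/-- For `ρ > 2/log 2` and `x > 4` with `ρ = x/log x`, and `N = N_ρ`:
(a) `ben(N p^t) ≥ t · ben(N p)` for every prime `p` and every `t ≥ 1`;
(b) for every prime `p ≤ x` one has `p^{α_p} ∣ N` and
`ben(N / p^t) ≥ t · ben(N / p)` for `1 ≤ t ≤ α_p`. -/
theorem benefit_convexity (ρ x : ℝ)
    (hρ : 2 / Real.log 2 < ρ) (hx : 4 < x) (hρx : ρ = x / Real.log x) :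
    (∀ p : ℕ, p.Prime → ∀ t : ℕ, 1 ≤ t →
      (t : ℝ) * benefit x (Nrho x * p) ≤ benefit x (Nrho x * p ^ t)) ∧
    (∀ p : ℕ, p.Prime → (p : ℝ) ≤ x →
      p ^ alphaExp x p ∣ Nrho x ∧
      ∀ t : ℕ, 1 ≤ t → t ≤ alphaExp x p →
        (t : ℝ) * benefit x (Nrho x / p) ≤ benefit x (Nrho x / p ^ t)) := by
  constructor
  · intro p hp t ht
    set v := (Nrho x).factorization p with hv
    have h1 : benefit x (Nrho x * p) =
        (ell (p ^ (v + 1)) : ℝ) - (ell (p ^ v) : ℝ)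
        - x / Real.log x * ((1 : ℝ) * Real.log p) := by
      have := benefit_mul_pow x hp 1
      rw [pow_one] at this
      simpa using this
    have h2 := benefit_mul_pow x hp t
    rw [h1, h2, ← hv]
    have hA := claimA hp v t ht
    have hring : (t : ℝ) * ((ell (p ^ (v + 1)) : ℝ) - (ell (p ^ v) : ℝ)
        - x / Real.log x * ((1 : ℝ) * Real.log p))
        = (t : ℝ) * ((ell (p ^ (v + 1)) : ℝ) - (ell (p ^ v) : ℝ))
          - x / Real.log x * ((t : ℝ) * Real.log p) := by ring
    rw [hring]
    linarith
  · intro p hp hpx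
    have hfact : (Nrho x).factorization p = alphaExp x p := factorization_Nrho x hp hpx
    constructor
    · rw [← hfact]; exact Nat.ordProj_dvd _ _
    · intro t ht htα
      set v := (Nrho x).factorization p with hv
      have htv : t ≤ v := by rw [hv]; rw [← hfact] at htα; exact htα
      have h1v : 1 ≤ v := le_trans ht htv
      have h1 : benefit x (Nrho x / p) =
          (ell (p ^ (v - 1)) : ℝ) - (ell (p ^ v) : ℝ)
          + x / Real.log x * ((1 : ℝ) * Real.log p) := by
        have := benefit_div_pow x hp (t := 1) h1v
        rw [pow_one] at this
        simpa using this
      have h2 := benefit_div_pow x hp htv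
      rw [h1, h2, ← hv]
      have hB := claimB hp v t ht htv
      have hring : (t : ℝ) * ((ell (p ^ (v - 1)) : ℝ) - (ell (p ^ v) : ℝ)
          + x / Real.log x * ((1 : ℝ) * Real.log p))
          = (t : ℝ) * ((ell (p ^ (v - 1)) : ℝ) - (ell (p ^ v) : ℝ))
            + x / Real.log x * ((t : ℝ) * Real.log p) := by ring
      rw [hring]
      linarith
end
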